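/- Let k be an algebraically closed field of characteristic different from 2, and let q(x, y, z) = a·x² + b·y² + c·z² be a diagonal ternary quadratic form with nonzero coefficients a, b, c in the rational function field k(t). Then q has a nontrivial zero over k(t); that is, there exist u, v, w in k(t), not all zero, with a·u² + b·v² + c·w² = 0. -/

import Mathlib

open Polynomial

namespace Tsen13

variable {k : Type*} [Field k] [IsAlgClosed k]

/-- A squarefree polynomial over an algebraically closed field divides any
polynomial vanishing at all of its roots. -/
lemma sqfree_dvd_of_roots {p F : k[X]} (hp : p ≠ 0) (hsq : Squarefree p)
    (h : ∀ θ ∈ p.roots, F.eval θ = 0) : p ∣ F := by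
  classical
  rcases eq_or_ne F 0 with rfl | hF
  · exact dvd_zero p
  have hle : p.roots ≤ F.roots := by
    rw [Multiset.le_iff_count]
    intro θ
    rcases Nat.lt_or_ge (Multiset.count θ p.roots) 1 with h0 | h1
    · omega
    · have hc1 : Multiset.count θ p.roots ≤ 1 := by
        by_contra hgt
        push_neg at hgt
        have hdvd : (X - Polynomial.C θ) * (X - Polynomial.C θ) ∣ p := by
          have h2 := Polynomial.pow_rootMultiplicity_dvd p θ
          rw [← Polynomial.count_roots] at h2
          calc (X - Polynomial.C θ) * (X - Polynomial.C θ)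
              = (X - Polynomial.C θ) ^ 2 := (sq _).symm
            _ ∣ (X - Polynomial.C θ) ^ Multiset.count θ p.roots := pow_dvd_pow _ hgt
            _ ∣ p := h2
        exact (Polynomial.not_isUnit_X_sub_C θ) (hsq _ hdvd)
      have hmem : θ ∈ p.roots := Multiset.one_le_count_iff_mem.mp h1
      have hFθ : F.eval θ = 0 := h θ hmem
      have : 1 ≤ Multiset.count θ F.roots :=
        Multiset.one_le_count_iff_mem.mpr ((Polynomial.mem_roots hF).mpr hFθ)
      omega
  have h1 : (p.roots.map fun a => X - Polynomial.C a).prod ∣ F :=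
    ((Multiset.prod_X_sub_C_dvd_iff_le_roots hF _).mpr hle)
  have h3 := Polynomial.Splits.eq_prod_roots (IsAlgClosed.splits p)
  rw [h3]
  exact (IsUnit.mul_left_dvd (Polynomial.isUnit_C.mpr
    (isUnit_iff_ne_zero.mpr (Polynomial.leadingCoeff_ne_zero.mpr hp)))).mpr h1

/-- Nontrivial isotropy of the ternary form `⟨1, P, Q⟩` over `k[t]`. -/
def Sol (P Q : k[X]) : Prop :=
  ∃ U V W : k[X], ¬(U = 0 ∧ V = 0 ∧ W = 0) ∧ U ^ 2 + P * V ^ 2 + Q * W ^ 2 = 0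

lemma Sol.swap {P Q : k[X]} (h : Sol P Q) : Sol Q P := by
  obtain ⟨U, V, W, hnt, heq⟩ := h
  exact ⟨U, W, V, fun ⟨h1, h2, h3⟩ => hnt ⟨h1, h3, h2⟩, by linear_combination heq⟩

lemma sol_aux : ∀ n : ℕ, ∀ P Q : k[X], P ≠ 0 → Q ≠ 0 →
    P.natDegree ≤ Q.natDegree → P.natDegree + Q.natDegree ≤ n → Sol P Q := by
  intro n
  induction n using Nat.strong_induction_on with
  | _ n ih =>
  intro P Q hP hQ hord hsum
  have call : ∀ m, m < n → ∀ P' Q' : k[X], P' ≠ 0 → Q' ≠ 0 →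
      P'.natDegree + Q'.natDegree ≤ m → Sol P' Q' := by
    intro m hm P' Q' hP' hQ' hsum'
    rcases le_or_gt P'.natDegree Q'.natDegree with h | h
    · exact ih m hm P' Q' hP' hQ' h hsum'
    · exact (ih m hm Q' P' hQ' hP' h.le (by omega)).swap
  rcases Nat.eq_zero_or_pos P.natDegree with hP0 | hP1
  · -- base case: P is a nonzero constant
    have hPC : P = Polynomial.C (P.coeff 0) := Polynomial.eq_C_of_natDegree_eq_zero hP0
    obtain ⟨r, hr⟩ : ∃ z : k, z ^ 2 = -(P.coeff 0) :=
      IsAlgClosed.exists_pow_nat_eq _ two_pos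
    refine ⟨Polynomial.C r, 1, 0, by simp, ?_⟩
    rw [hPC]
    simp only [one_pow, mul_one, zero_pow, mul_zero, add_zero, ← Polynomial.C_pow, hr,
      ← Polynomial.C_add, neg_add_cancel, Polynomial.C_0]
    norm_num
  · have hQ1 : 1 ≤ Q.natDegree := le_trans hP1 hord
    by_cases hsf : Squarefree Q
    · -- descent step
      classical
      set s : Finset k := Q.roots.toFinset with hs
      have hinj : Set.InjOn (id : k → k) s := Function.injective_id.injOn
      choose r hr using fun θ : k =>
        IsAlgClosed.exists_pow_nat_eq (k := k) (-P.eval θ) two_pos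
      set m : k[X] := Lagrange.interpolate s id r with hmdef
      have hdm : m.degree < s.card := Lagrange.degree_interpolate_lt _ hinj
      have hscard : s.card ≤ Q.natDegree := by
        calc (s.card : ℕ) ≤ Multiset.card Q.roots := Q.roots.toFinset_card_le
          _ ≤ Q.natDegree := Polynomial.card_roots' Q
      have hroot : ∀ θ ∈ Q.roots, (m ^ 2 + P).eval θ = 0 := by
        intro θ hθ
        have hθs : θ ∈ s := Multiset.mem_toFinset.mpr hθ
        have hev : m.eval (id θ) = r θ := Lagrange.eval_interpolate_at_node r hinj hθs
        simp only [id] at hev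
        simp [hev, hr θ]
      obtain ⟨D, hD⟩ : Q ∣ m ^ 2 + P := sqfree_dvd_of_roots hQ hsf hroot
      rcases eq_or_ne D 0 with rfl | hD0
      · rw [mul_zero] at hD
        exact ⟨m, 1, 0, by simp, by linear_combination hD⟩
      · have hFne : m ^ 2 + P ≠ 0 := by rw [hD]; exact mul_ne_zero hQ hD0
        have hdm' : m.natDegree + 1 ≤ Q.natDegree := by
          rcases eq_or_ne m 0 with hm0 | hm0
          · rw [hm0, Polynomial.natDegree_zero]; omega
          · have : m.natDegree < s.card :=
              (Polynomial.natDegree_lt_iff_degree_lt hm0).mpr hdm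
            omega
        have hdF : (m ^ 2 + P).natDegree ≤ 2 * Q.natDegree - 1 := by
          have h1 := Polynomial.natDegree_add_le (m ^ 2) P
          have h2 : (m ^ 2).natDegree = 2 * m.natDegree := Polynomial.natDegree_pow m 2
          have h3 : max ((m ^ 2).natDegree) P.natDegree ≤ 2 * Q.natDegree - 1 :=
            max_le (by omega) (by omega)
          omega
        have hdD : D.natDegree + 1 ≤ Q.natDegree := by
          have h4 : (m ^ 2 + P).natDegree = Q.natDegree + D.natDegree := by
            rw [hD]; exact Polynomial.natDegree_mul hQ hD0
          omega
        obtain ⟨X', Y, Z, hnt, heq⟩ :=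
          call (P.natDegree + D.natDegree) (by omega) P D hP hD0 le_rfl
        refine ⟨X' * m + P * Y, X' - Y * m, D * Z, ?_, by
          linear_combination (Q * D) * heq + (X' ^ 2 + P * Y ^ 2) * hD⟩
        rintro ⟨h1, h2, h3⟩
        have hZ : Z = 0 := by
          rcases mul_eq_zero.mp h3 with h | h
          · exact absurd h hD0
          · exact h
        have hY : Y = 0 := by
          have hYCD : Y * (Q * D) = 0 := by linear_combination h1 - m * h2 - Y * hD
          rcases mul_eq_zero.mp hYCD with h | h
          · exact h
          · exact absurd h (mul_ne_zero hQ hD0)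
        have hX : X' = 0 := by
          have := h2
          rw [hY, zero_mul, sub_zero] at this
          exact this
        exact hnt ⟨hX, hY, hZ⟩
    · -- Q not squarefree: strip a square factor
      rw [Squarefree] at hsf
      push_neg at hsf
      obtain ⟨x, hdvd, hxu⟩ := hsf
      obtain ⟨Q', hQ'⟩ := hdvd
      have hx0 : x ≠ 0 := by
        rintro rfl
        rw [mul_zero, zero_mul] at hQ'
        exact hQ hQ'
      have hQ'0 : Q' ≠ 0 := by
        rintro rfl
        rw [mul_zero] at hQ'
        exact hQ hQ'
      have hxdeg : 1 ≤ x.natDegree := by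
        by_contra h
        push_neg at h
        have hx : x = Polynomial.C (x.coeff 0) :=
          Polynomial.eq_C_of_natDegree_eq_zero (by omega)
        apply hxu
        rw [hx]
        exact Polynomial.isUnit_C.mpr (isUnit_iff_ne_zero.mpr (by
          intro h0
          apply hx0
          rw [hx, h0, Polynomial.C_0]))
      have hdQ' : Q'.natDegree + 2 ≤ Q.natDegree := by
        have h5 : Q.natDegree = x.natDegree + x.natDegree + Q'.natDegree := by
          rw [hQ', Polynomial.natDegree_mul (mul_ne_zero hx0 hx0) hQ'0,
            Polynomial.natDegree_mul hx0 hx0]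
        omega
      obtain ⟨X', Y, Z, hnt, heq⟩ :=
        call (P.natDegree + Q'.natDegree) (by omega) P Q' hP hQ'0 le_rfl
      refine ⟨x * X', x * Y, Z, ?_, by linear_combination x ^ 2 * heq + Z ^ 2 * hQ'⟩
      rintro ⟨h1, h2, h3⟩
      exact hnt ⟨(mul_eq_zero.mp h1).resolve_left hx0,
        (mul_eq_zero.mp h2).resolve_left hx0, h3⟩

lemma sol (P Q : k[X]) (hP : P ≠ 0) (hQ : Q ≠ 0) : Sol P Q := by
  rcases le_or_gt P.natDegree Q.natDegree with h | h
  · exact sol_aux (P.natDegree + Q.natDegree) P Q hP hQ h le_rfl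
  · exact (sol_aux (Q.natDegree + P.natDegree) Q P hQ hP h.le le_rfl).swap

end Tsen13

/-- Tsen's theorem for conics: a diagonal ternary quadratic form with nonzero
coefficients over `k(t)`, `k` algebraically closed of characteristic ≠ 2, has a
nontrivial zero. -/
theorem stmt_13 (k : Type*) [Field k] [IsAlgClosed k] (hchar : ringChar k ≠ 2)
    (a b c : RatFunc k) (ha : a ≠ 0) (hb : b ≠ 0) (hc : c ≠ 0) :
    ∃ u v w : RatFunc k, ¬(u = 0 ∧ v = 0 ∧ w = 0) ∧
      a * u ^ 2 + b * v ^ 2 + c * w ^ 2 = 0 := by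
  classical
  have hβ : b / a ≠ 0 := div_ne_zero hb ha
  have hγ : c / a ≠ 0 := div_ne_zero hc ha
  set p := (b / a).num with hpdef
  set q := (b / a).denom with hqdef
  set r := (c / a).num with hrdef
  set s := (c / a).denom with hsdef
  have hp : p ≠ 0 := RatFunc.num_ne_zero hβ
  have hq : q ≠ 0 := (b / a).denom_ne_zero
  have hr : r ≠ 0 := RatFunc.num_ne_zero hγ
  have hs : s ≠ 0 := (c / a).denom_ne_zero
  obtain ⟨U, V, W, hnt, heq⟩ := Tsen13.sol (p * q) (r * s) (mul_ne_zero hp hq) (mul_ne_zero hr hs)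
  set φ := algebraMap (Polynomial k) (RatFunc k) with hφ
  have hφinj : Function.Injective φ := RatFunc.algebraMap_injective k
  refine ⟨φ U, φ (q * V), φ (s * W), ?_, ?_⟩
  · rintro ⟨h1, h2, h3⟩
    apply hnt
    refine ⟨hφinj (h1.trans (map_zero φ).symm), ?_, ?_⟩
    · have := hφinj (h2.trans (map_zero φ).symm)
      exact (mul_eq_zero.mp this).resolve_left hq
    · have := hφinj (h3.trans (map_zero φ).symm)
      exact (mul_eq_zero.mp this).resolve_left hs
  · have hb' : φ p * a = b * φ q := by
      have h := RatFunc.num_div_denom (b / a)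
      rw [div_eq_div_iff (RatFunc.algebraMap_ne_zero hq) ha] at h
      exact h
    have hc' : φ r * a = c * φ s := by
      have h := RatFunc.num_div_denom (c / a)
      rw [div_eq_div_iff (RatFunc.algebraMap_ne_zero hs) ha] at h
      exact h
    have hmap : φ U ^ 2 + φ p * φ q * φ V ^ 2 + φ r * φ s * φ W ^ 2 = 0 := by
      have := congrArg φ heq
      simpa [map_add, map_mul, map_pow] using this
    have hqm : φ (q * V) = φ q * φ V := map_mul φ q V
    have hsm : φ (s * W) = φ s * φ W := map_mul φ s W
    rw [hqm, hsm]
    linear_combination a * hmap - φ q * φ V ^ 2 * hb' - φ s * φ W ^ 2 * hc'
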